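/- Let n ≥ 3 and k ≥ 3 with n ≥ k. Any family S of permutations of [n] such that every k-subset of [n] appears in at least 2(k-1)! + 1 distinct orders across S satisfies |S| ≥ (1/(k-2)) · log₂(n-k+2). In particular, f_k(n, 2(k-1)!+1) = Ω(log n) for fixed k. -/

import Mathlib

/-- The strict order induced on a subset `X` of `[n]` by a permutation `P`
(thought of as assigning each element its position): `a` before `b` iff `P a < P b`. -/
def ordOn {n : ℕ} (P : Equiv.Perm (Fin n)) (X : Finset (Fin n)) :
    ↥X → ↥X → Prop :=
  fun a b => P a.val < P b.val

/-- The set of orders (patterns) realized on `X` by a family `S` of permutations. -/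
def realized {n : ℕ} (S : Set (Equiv.Perm (Fin n))) (X : Finset (Fin n)) :
    Set (↥X → ↥X → Prop) :=
  (fun P => ordOn P X) '' S

open Finset

section rank
open scoped Classical

variable {α β : Type*} [Fintype α] [LinearOrder β]

noncomputable def rkRel (R : α → α → Prop) (c : α) : ℕ :=
  (Finset.univ.filter (fun d => R d c)).card

variable {g : α → β} {R : α → α → Prop}

lemma rk_mono (hR : ∀ x y, R x y ↔ g x < g y) {c d : α} (h : g c < g d) :
    rkRel R c < rkRel R d := by
  apply Finset.card_lt_card
  have hsub : Finset.univ.filter (fun e => R e c) ⊆ Finset.univ.filter (fun e => R e d) := by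
    intro e he
    simp only [Finset.mem_filter, Finset.mem_univ, true_and, hR] at he ⊢
    exact he.trans h
  rw [Finset.ssubset_iff_of_subset hsub]
  exact ⟨c, by simp [hR, h], by simp [hR]⟩

lemma rk_lt_iff (hg : Function.Injective g) (hR : ∀ x y, R x y ↔ g x < g y) (c d : α) :
    rkRel R c < rkRel R d ↔ g c < g d := by
  constructor
  · intro h
    by_contra hcd
    push_neg at hcd
    rcases hcd.lt_or_eq with h1 | h1
    · exact absurd (rk_mono hR h1) (by omega)
    · rw [hg h1] at h; exact lt_irrefl _ h
  · exact rk_mono hR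

lemma rk_inj (hg : Function.Injective g) (hR : ∀ x y, R x y ↔ g x < g y) :
    Function.Injective (rkRel R) := by
  intro c d h
  by_contra hne
  rcases (hg.ne_iff.mpr hne).lt_or_gt with h1 | h1
  · exact absurd h (Nat.ne_of_lt (rk_mono hR h1))
  · exact absurd h.symm (Nat.ne_of_lt (rk_mono hR h1))

lemma rk_lt_card (hR : ∀ x y, R x y ↔ g x < g y) (c : α) :
    rkRel R c < Fintype.card α := by
  rw [← Finset.card_univ]
  apply Finset.card_lt_card
  rw [Finset.ssubset_iff_of_subset (Finset.filter_subset _ _)]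
  exact ⟨c, Finset.mem_univ c, by simp [hR]⟩

lemma rk_adj (hg : Function.Injective g) (hR : ∀ x y, R x y ↔ g x < g y) {A B : α}
    (h : g A < g B) (hadj : ∀ e, e ≠ A → e ≠ B → ¬(g A < g e ∧ g e < g B)) :
    rkRel R B = rkRel R A + 1 := by
  have heq : Finset.univ.filter (fun e => R e B)
      = insert A (Finset.univ.filter (fun e => R e A)) := by
    ext e
    simp only [Finset.mem_filter, Finset.mem_insert, Finset.mem_univ, true_and, hR]
    constructor
    · intro he
      rcases lt_trichotomy (g e) (g A) with h1 | h1 | h1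
      · right; exact h1
      · left; exact hg h1
      · exfalso
        refine hadj e ?_ ?_ ⟨h1, he⟩
        · rintro rfl; exact lt_irrefl _ h1
        · rintro rfl; exact lt_irrefl _ he
    · rintro (rfl | he)
      · exact h
      · exact he.trans h
  rw [rkRel, rkRel, heq, Finset.card_insert_of_notMem (by simp [hR])]

end rank

open scoped Classical in
lemma realized_ncard_le {n k : ℕ} (hk : 3 ≤ k) (S : Finset (Equiv.Perm (Fin n)))
    {X : Finset (Fin n)} (hX : X.card = k) {a b : Fin n} (ha : a ∈ X) (hb : b ∈ X)
    (hab : a ≠ b)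
    (habj : ∀ P ∈ S, ∀ x ∈ X, x ≠ a → x ≠ b →
      ¬(P a < P x ∧ P x < P b) ∧ ¬(P b < P x ∧ P x < P a)) :
    (realized ↑S X).ncard ≤ 2 * Nat.factorial (k - 1) := by
  set A : ↥X := ⟨a, ha⟩ with hA
  set B : ↥X := ⟨b, hb⟩ with hB
  have hAB : A ≠ B := fun h => hab (congrArg Subtype.val h)
  have hcardX : Fintype.card ↥X = k := by rw [Fintype.card_coe, hX]
  have hcard : Fintype.card {c : ↥X // c ≠ B} = k - 1 := by
    rw [Fintype.card_subtype, Finset.filter_ne', Finset.card_erase_of_mem (Finset.mem_univ _),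
      Finset.card_univ, hcardX]
  let junk : {c : ↥X // c ≠ B} ↪ Fin (k - 1) := (Fintype.equivFinOfCardEq hcard).toEmbedding
  let sh : (↥X → ↥X → Prop) → {c : ↥X // c ≠ B} → Fin (k - 1) := fun R c =>
    ⟨min (if rkRel R c.1 < rkRel R B then rkRel R c.1 else rkRel R c.1 - 1) (k - 2),
      Nat.lt_of_le_of_lt (Nat.min_le_right _ _) (by omega)⟩
  let Φ : (↥X → ↥X → Prop) → Bool × ({c : ↥X // c ≠ B} ↪ Fin (k - 1)) := fun R =>
    (decide (R A B), if h : Function.Injective (sh R) then ⟨sh R, h⟩ else junk)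
  -- facts about relations coming from a permutation
  have fact : ∀ P : Equiv.Perm (Fin n), P ∈ S →
      (∀ c d : ↥X, ordOn P X c d ↔ rkRel (ordOn P X) c < rkRel (ordOn P X) d) ∧
      (∀ c : ↥X, rkRel (ordOn P X) c < k) ∧
      ((ordOn P X A B → rkRel (ordOn P X) B = rkRel (ordOn P X) A + 1) ∧
       (¬ ordOn P X A B → rkRel (ordOn P X) A = rkRel (ordOn P X) B + 1)) ∧
      (Function.Injective (rkRel (ordOn P X))) ∧
      (∀ c : {c : ↥X // c ≠ B},
        (sh (ordOn P X) c : ℕ) =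
          if rkRel (ordOn P X) c.1 < rkRel (ordOn P X) B then rkRel (ordOn P X) c.1
          else rkRel (ordOn P X) c.1 - 1) ∧
      Function.Injective (sh (ordOn P X)) := by
    intro P hP
    set g : ↥X → Fin n := fun c => P c.1 with hgdef
    have hg : Function.Injective g := fun c d h => Subtype.ext (P.injective h)
    have hR : ∀ x y : ↥X, ordOn P X x y ↔ g x < g y := fun x y => Iff.rfl
    have hiff : ∀ c d : ↥X, ordOn P X c d ↔ rkRel (ordOn P X) c < rkRel (ordOn P X) d :=
      fun c d => (hR c d).trans (rk_lt_iff hg hR c d).symm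
    have hlt : ∀ c : ↥X, rkRel (ordOn P X) c < k := fun c => hcardX ▸ rk_lt_card hR c
    have hgne : g A ≠ g B := fun h => hAB (hg h)
    have hadj1 : ∀ e : ↥X, e ≠ A → e ≠ B → ¬(g A < g e ∧ g e < g B) := by
      intro e heA heB
      exact (habj P hP e.1 e.2 (fun h => heA (Subtype.ext h)) (fun h => heB (Subtype.ext h))).1
    have hadj2 : ∀ e : ↥X, e ≠ B → e ≠ A → ¬(g B < g e ∧ g e < g A) := by
      intro e heB heA
      exact (habj P hP e.1 e.2 (fun h => heA (Subtype.ext h)) (fun h => heB (Subtype.ext h))).2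
    have hcase : (ordOn P X A B → rkRel (ordOn P X) B = rkRel (ordOn P X) A + 1) ∧
        (¬ ordOn P X A B → rkRel (ordOn P X) A = rkRel (ordOn P X) B + 1) := by
      constructor
      · intro h
        exact rk_adj hg hR ((hR A B).mp h) hadj1
      · intro h
        have hBA : g B < g A := by
          rcases lt_trichotomy (g A) (g B) with h1 | h1 | h1
          · exact absurd ((hR A B).mpr h1) h
          · exact absurd h1 hgne
          · exact h1
        exact rk_adj hg hR hBA hadj2
    have hrkinj : Function.Injective (rkRel (ordOn P X)) := rk_inj hg hR
    have hval : ∀ c : {c : ↥X // c ≠ B},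
        (sh (ordOn P X) c : ℕ) =
          if rkRel (ordOn P X) c.1 < rkRel (ordOn P X) B then rkRel (ordOn P X) c.1
          else rkRel (ordOn P X) c.1 - 1 := by
      intro c
      have h1 : rkRel (ordOn P X) c.1 < k := hlt c.1
      have h2 : rkRel (ordOn P X) B < k := hlt B
      have h3 : rkRel (ordOn P X) c.1 ≠ rkRel (ordOn P X) B := fun h => c.2 (hrkinj h)
      show min _ _ = _
      rw [min_eq_left]
      split_ifs <;> omega
    have hshinj : Function.Injective (sh (ordOn P X)) := by
      intro c d h
      have hcd := congrArg Fin.val h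
      rw [hval c, hval d] at hcd
      have h1 : rkRel (ordOn P X) c.1 < k := hlt c.1
      have h2 : rkRel (ordOn P X) d.1 < k := hlt d.1
      have h3 : rkRel (ordOn P X) c.1 ≠ rkRel (ordOn P X) B := fun h => c.2 (hrkinj h)
      have h4 : rkRel (ordOn P X) d.1 ≠ rkRel (ordOn P X) B := fun h => d.2 (hrkinj h)
      have : rkRel (ordOn P X) c.1 = rkRel (ordOn P X) d.1 := by
        split_ifs at hcd <;> omega
      exact Subtype.ext (hrkinj this)
    exact ⟨hiff, hlt, hcase, hrkinj, hval, hshinj⟩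
  -- the injection
  have hinj : Set.InjOn Φ (realized ↑S X) := by
    rintro R1 ⟨P, hP, rfl⟩ R2 ⟨Q, hQ, rfl⟩ hΦ
    have hP' : P ∈ S := hP
    have hQ' : Q ∈ S := hQ
    obtain ⟨hiff1, hlt1, hcase1, hrkinj1, hval1, hshinj1⟩ := fact P hP'
    obtain ⟨hiff2, hlt2, hcase2, hrkinj2, hval2, hshinj2⟩ := fact Q hQ'
    have hbit : (ordOn P X A B ↔ ordOn Q X A B) :=
      decide_eq_decide.mp (congrArg Prod.fst hΦ)
    have hsh : sh (ordOn P X) = sh (ordOn Q X) := by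
      have h2 := congrArg Prod.snd hΦ
      simp only [Φ] at h2
      rw [dif_pos hshinj1, dif_pos hshinj2] at h2
      simpa using h2
    have hshA : (sh (ordOn P X) ⟨A, hAB⟩ : ℕ) = (sh (ordOn Q X) ⟨A, hAB⟩ : ℕ) := by rw [hsh]
    rw [hval1 ⟨A, hAB⟩, hval2 ⟨A, hAB⟩] at hshA
    have hcoeA : ((⟨A, hAB⟩ : {c : ↥X // c ≠ B}) : ↥X) = A := rfl
    rw [hcoeA] at hshA
    -- rkRel at B agree
    have hsB : rkRel (ordOn P X) B = rkRel (ordOn Q X) B := by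
      by_cases hc : ordOn P X A B
      · have e1 := hcase1.1 hc
        have e2 := hcase2.1 (hbit.mp hc)
        rw [if_pos (by omega), if_pos (by omega)] at hshA
        omega
      · have e1 := hcase1.2 hc
        have e2 := hcase2.2 (fun h => hc (hbit.mpr h))
        rw [if_neg (by omega), if_neg (by omega)] at hshA
        omega
    -- all ranks agree
    have hrk : ∀ c : ↥X, rkRel (ordOn P X) c = rkRel (ordOn Q X) c := by
      intro c
      by_cases hcB : c = B
      · rw [hcB]; exact hsB
      · have hv : (sh (ordOn P X) ⟨c, hcB⟩ : ℕ) = (sh (ordOn Q X) ⟨c, hcB⟩ : ℕ) := by rw [hsh]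
        rw [hval1 ⟨c, hcB⟩, hval2 ⟨c, hcB⟩] at hv
        have hcoec : ((⟨c, hcB⟩ : {c : ↥X // c ≠ B}) : ↥X) = c := rfl
        rw [hcoec] at hv
        have h1 : rkRel (ordOn P X) c < k := hlt1 c
        have h2 : rkRel (ordOn Q X) c < k := hlt2 c
        have h3 : rkRel (ordOn P X) c ≠ rkRel (ordOn P X) B := fun h => hcB (hrkinj1 h)
        have h4 : rkRel (ordOn Q X) c ≠ rkRel (ordOn Q X) B := fun h => hcB (hrkinj2 h)
        rw [hsB] at h3
        split_ifs at hv <;> omega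
    funext c d
    exact propext (((hiff1 c d).trans (by rw [hrk c, hrk d])).trans (hiff2 c d).symm)
  calc (realized ↑S X).ncard
      ≤ (Set.univ : Set (Bool × ({c : ↥X // c ≠ B} ↪ Fin (k - 1)))).ncard :=
        Set.ncard_le_ncard_of_injOn Φ (fun R _ => Set.mem_univ _) hinj Set.finite_univ
    _ = 2 * Nat.factorial (k - 1) := by
        rw [Set.ncard_univ, Nat.card_eq_fintype_card, Fintype.card_prod, Fintype.card_bool,
          Fintype.card_embedding_eq, hcard, Fintype.card_fin, Nat.descFactorial_self]

open scoped Classical in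
/-- if every `k`-subset of `[n]` appears in at least `2·(k-1)! + 1`
distinct orders across the family `S`, then `|S| ≥ (1/(k-2)) · log₂(n-k+2)`. -/
theorem stmt_9 (n k : ℕ) (hn : 3 ≤ n) (hk : 3 ≤ k) (hkn : k ≤ n)
    (S : Finset (Equiv.Perm (Fin n)))
    (hS : ∀ X : Finset (Fin n), X.card = k →
      2 * Nat.factorial (k - 1) + 1 ≤ (realized ↑S X).ncard) :
    (1 / ((k : ℝ) - 2)) * Real.logb 2 ((n : ℝ) - k + 2) ≤ S.card := by
  -- choose a set W of size k - 2
  obtain ⟨W, -, hW⟩ := Finset.exists_subset_card_eq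
    (show k - 2 ≤ (Finset.univ : Finset (Fin n)).card by
      rw [Finset.card_univ, Fintype.card_fin]; omega)
  -- encoding of elements outside W
  have hEbound : ∀ (x : Fin n) (P : ↥S), (W.filter fun w => P.1 w < P.1 x).card < k - 1 :=
    fun x P => lt_of_le_of_lt (le_trans (Finset.card_filter_le W _) (le_of_eq hW)) (by omega)
  set E : Fin n → (↥S → Fin (k - 1)) := fun x P => ⟨_, hEbound x P⟩ with hE
  have hinj : Set.InjOn E ↑(Wᶜ) := by
    intro x hx y hy hxy
    by_contra hne
    have hxW : x ∉ W := by simpa using hx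
    have hyW : y ∉ W := by simpa using hy
    set X : Finset (Fin n) := insert x (insert y W) with hXdef
    have hXcard : X.card = k := by
      rw [hXdef, Finset.card_insert_of_notMem (by simp [hne, hxW]),
        Finset.card_insert_of_notMem hyW, hW]
      omega
    have hfil : ∀ P ∈ S, (W.filter fun w => P w < P x).card
        = (W.filter fun w => P w < P y).card := by
      intro P hP
      have := congrFun hxy (⟨P, hP⟩ : ↥S)
      exact congrArg Fin.val this
    have habj : ∀ P ∈ S, ∀ e ∈ X, e ≠ x → e ≠ y →
        ¬(P x < P e ∧ P e < P y) ∧ ¬(P y < P e ∧ P e < P x) := by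
      intro P hP e heX hex hey
      have heW : e ∈ W := by
        rw [hXdef] at heX
        simp only [Finset.mem_insert] at heX
        tauto
      constructor
      · rintro ⟨h1, h2⟩
        have hsub : (W.filter fun w => P w < P x) ⊆ (W.filter fun w => P w < P y) := by
          intro w hw
          simp only [Finset.mem_filter] at hw ⊢
          exact ⟨hw.1, hw.2.trans (h1.trans h2)⟩
        have hss : (W.filter fun w => P w < P x) ⊂ (W.filter fun w => P w < P y) := by
          rw [Finset.ssubset_iff_of_subset hsub]
          exact ⟨e, Finset.mem_filter.2 ⟨heW, h2⟩,
            fun hmem => absurd (Finset.mem_filter.1 hmem).2 (not_lt.2 (le_of_lt h1))⟩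
        exact absurd (hfil P hP) (ne_of_lt (Finset.card_lt_card hss))
      · rintro ⟨h1, h2⟩
        have hsub : (W.filter fun w => P w < P y) ⊆ (W.filter fun w => P w < P x) := by
          intro w hw
          simp only [Finset.mem_filter] at hw ⊢
          exact ⟨hw.1, hw.2.trans (h1.trans h2)⟩
        have hss : (W.filter fun w => P w < P y) ⊂ (W.filter fun w => P w < P x) := by
          rw [Finset.ssubset_iff_of_subset hsub]
          exact ⟨e, Finset.mem_filter.2 ⟨heW, h2⟩,
            fun hmem => absurd (Finset.mem_filter.1 hmem).2 (not_lt.2 (le_of_lt h1))⟩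
        exact absurd (hfil P hP).symm (ne_of_lt (Finset.card_lt_card hss))
    have h1 := hS X hXcard
    have h2 := realized_ncard_le hk S hXcard (Finset.mem_insert_self x _)
      (by rw [hXdef]; exact Finset.mem_insert_of_mem (Finset.mem_insert_self y W)) hne habj
    omega
  -- cardinality bound
  have hcount : n - (k - 2) ≤ (k - 1) ^ S.card := by
    have hle := Finset.card_le_card_of_injOn E (fun x _ => Finset.mem_univ (E x)) hinj
    rw [Finset.card_compl, Finset.card_univ, Fintype.card_fin, hW] at hle
    calc n - (k - 2) ≤ (Finset.univ : Finset (↥S → Fin (k - 1))).card := hle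
      _ = (k - 1) ^ S.card := by
          rw [Finset.card_univ, Fintype.card_fun, Fintype.card_fin, Fintype.card_coe]
  have hpow : n - (k - 2) ≤ 2 ^ ((k - 2) * S.card) := by
    refine le_trans hcount ?_
    rw [pow_mul]
    refine Nat.pow_le_pow_left ?_ _
    have := Nat.lt_two_pow_self (n := k - 2)
    omega
  -- pass to the reals
  have hkR : (3 : ℝ) ≤ (k : ℝ) := by exact_mod_cast hk
  have hnR : (k : ℝ) ≤ (n : ℝ) := by exact_mod_cast hkn
  have hxpos : (0 : ℝ) < (n : ℝ) - k + 2 := by linarith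
  have hcast : ((n : ℝ) - k + 2) ≤ (2 : ℝ) ^ ((k - 2) * S.card) := by
    calc (n : ℝ) - k + 2 = ((n - (k - 2) : ℕ) : ℝ) := by
          rw [Nat.cast_sub (le_trans (by omega) hkn), Nat.cast_sub (by omega : 2 ≤ k)]
          push_cast
          ring
      _ ≤ ((2 ^ ((k - 2) * S.card) : ℕ) : ℝ) := by exact_mod_cast hpow
      _ = (2 : ℝ) ^ ((k - 2) * S.card) := by push_cast; ring
  have hlog : Real.logb 2 ((n : ℝ) - k + 2) ≤ ((k - 2) * S.card : ℕ) := by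
    have h1 : Real.logb 2 ((n : ℝ) - k + 2) ≤ Real.logb 2 ((2 : ℝ) ^ ((k - 2) * S.card)) :=
      Real.logb_le_logb_of_le (by norm_num) hxpos hcast
    refine le_trans h1 ?_
    rw [Real.logb_pow, Real.logb_self_eq_one (by norm_num : (1:ℝ) < 2), mul_one]
  have hk2 : (0 : ℝ) < (k : ℝ) - 2 := by linarith
  have hfin : Real.logb 2 ((n : ℝ) - k + 2) ≤ ((k : ℝ) - 2) * S.card := by
    refine le_trans hlog ?_
    rw [Nat.cast_mul, Nat.cast_sub (by omega : 2 ≤ k)]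
    push_cast
    linarith [le_refl (((k : ℝ) - 2) * (S.card : ℝ))]
  calc (1 / ((k : ℝ) - 2)) * Real.logb 2 ((n : ℝ) - k + 2)
      ≤ (1 / ((k : ℝ) - 2)) * (((k : ℝ) - 2) * S.card) := by
        apply mul_le_mul_of_nonneg_left hfin
        positivity
    _ = S.card := by field_simp
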